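/- Let p > Ñ₋/(Ñ₋-2) with Ñ₋ > 2. The planar vector field F(X,Z) given by F = (X(X + Z/Λ), Z(2 - pX - Z/Λ)) for Z > Λ and F = (X(X - (Ñ₋-2) + Z/λ), Z(Ñ₋ - pX - Z/λ)) for 0 < Z < Λ has exactly the stationary points N₀ = (0, 2Λ), A₀ = (Ñ₋-2, 0), M₀ = (2/(p-1), λ(Ñ₋-2-2/(p-1))), and O = (0,0) in the closed first quadrant (where the formula applies), with M₀ lying in the open region 0 < Z < Λ. -/

import Mathlib

theorem stmt14 (lam Lam Nt p : ℝ) (hlam : 0 < lam) (hll : lam < Lam)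
    (hNt : Nt = Lam / lam + 1) (hp : Nt / (Nt - 2) < p)
    (F : ℝ × ℝ → ℝ × ℝ)
    (hF : ∀ q : ℝ × ℝ, F q = if Lam < q.2
      then (q.1 * (q.1 + q.2 / Lam), q.2 * (2 - p * q.1 - q.2 / Lam))
      else (q.1 * (q.1 - (Nt - 2) + q.2 / lam),
            q.2 * (Nt - p * q.1 - q.2 / lam))) :
    {q : ℝ × ℝ | 0 ≤ q.1 ∧ 0 ≤ q.2 ∧ F q = 0} =
      {((0 : ℝ), 2 * Lam), (Nt - 2, 0),
        (2 / (p - 1), lam * (Nt - 2 - 2 / (p - 1))), (0, 0)} ∧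
    0 < lam * (Nt - 2 - 2 / (p - 1)) ∧
    lam * (Nt - 2 - 2 / (p - 1)) < Lam := by
  have hLam : 0 < Lam := hlam.trans hll
  have hlam' : lam ≠ 0 := ne_of_gt hlam
  have hLam' : Lam ≠ 0 := ne_of_gt hLam
  have h1 : 1 < Lam / lam := (one_lt_div hlam).mpr hll
  have hNt2 : 0 < Nt - 2 := by rw [hNt]; linarith
  have hp1 : 1 < p := by
    have : 1 < Nt / (Nt - 2) := (one_lt_div hNt2).mpr (by linarith)
    linarith
  have hp0 : 0 < p - 1 := by linarith
  have hp1' : p - 1 ≠ 0 := ne_of_gt hp0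
  have hNp : Nt < p * (Nt - 2) := (div_lt_iff₀ hNt2).mp hp
  have hx2 : 2 / (p - 1) < Nt - 2 := by
    rw [div_lt_iff₀ (by linarith : 0 < p - 1)]
    nlinarith
  have hx0 : 0 < 2 / (p - 1) := div_pos two_pos hp0
  have hlamNt : lam * (Nt - 2) = Lam - lam := by
    rw [hNt]; field_simp; ring
  have hM0 : 0 < lam * (Nt - 2 - 2 / (p - 1)) := mul_pos hlam (by linarith)
  have hMLam : lam * (Nt - 2 - 2 / (p - 1)) < Lam := by nlinarith
  refine ⟨?_, hM0, hMLam⟩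
  ext ⟨x, z⟩
  simp only [Set.mem_setOf_eq, Set.mem_insert_iff, Set.mem_singleton_iff,
    Prod.mk.injEq, hF, Prod.ext_iff, Prod.fst_zero, Prod.snd_zero]
  constructor
  · rintro ⟨hx, hz, hFq⟩
    split_ifs at hFq with hc
    · -- Lam < z
      obtain ⟨ha, hb⟩ := hFq
      have hzpos : 0 < z := hLam.trans hc
      have hb' : 2 - p * x - z / Lam = 0 := by
        rcases mul_eq_zero.mp hb with h | h
        · exact absurd h (ne_of_gt hzpos)
        · exact h
      have hxz : x = 0 := by
        rcases mul_eq_zero.mp ha with h | h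
        · exact h
        · exfalso; have : 0 < z / Lam := div_pos hzpos hLam; linarith
      subst hxz
      have hzv : z = 2 * Lam := by
        field_simp at hb'; linarith
      exact Or.inl ⟨rfl, hzv⟩
    · -- z ≤ Lam
      push_neg at hc
      obtain ⟨ha, hb⟩ := hFq
      simp only at ha hb
      rcases eq_or_lt_of_le hz with hz0 | hzpos
      · -- z = 0
        rw [← hz0] at ha hb
        simp only [zero_div, add_zero] at ha
        rcases mul_eq_zero.mp ha with h' | h'
        · exact Or.inr (Or.inr (Or.inr ⟨h', hz0.symm⟩))
        · refine Or.inr (Or.inl ⟨by linarith, hz0.symm⟩)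
      · have h : Nt - p * x - z / lam = 0 := by
          rcases mul_eq_zero.mp hb with h | h
          · exact absurd h (ne_of_gt hzpos)
          · exact h
        rcases mul_eq_zero.mp ha with h' | h'
        · -- x = 0 leads to contradiction
          exfalso
          subst h'
          have : z = lam * Nt := by field_simp at h; linarith
          rw [hNt] at this
          have : z = Lam + lam := by rw [this]; field_simp
          linarith
        · -- solve
          have hxv : x = 2 / (p - 1) := by
            have hsum : 2 - (p - 1) * x = 0 := by linear_combination h + h'
            field_simp
            nlinarith [hsum]
          have hzv : z = lam * (Nt - 2 - 2 / (p - 1)) := by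
            have h'' : lam * x - lam * (Nt - 2) + z = 0 := by
              have := h'
              field_simp at this
              linarith
            rw [hxv] at h''
            linarith
          exact Or.inr (Or.inr (Or.inl ⟨hxv, hzv⟩))
  · rintro (⟨hxe, hze⟩ | ⟨hxe, hze⟩ | ⟨hxe, hze⟩ | ⟨hxe, hze⟩) <;> subst hxe <;> subst hze
    · refine ⟨le_refl 0, by linarith, ?_⟩
      rw [if_pos (by linarith : Lam < 2 * Lam)]
      constructor
      · ring
      · field_simp
        ring
    · refine ⟨by linarith, le_refl 0, ?_⟩
      rw [if_neg (by linarith : ¬ Lam < (0:ℝ))]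
      constructor
      · simp
      · ring
    · refine ⟨by positivity, le_of_lt hM0, ?_⟩
      rw [if_neg (by push_neg; linarith : ¬ Lam < lam * (Nt - 2 - 2 / (p - 1)))]
      constructor
      · field_simp
        ring
      · field_simp
        ring
    · refine ⟨le_refl 0, le_refl 0, ?_⟩
      rw [if_neg (by linarith : ¬ Lam < (0:ℝ))]
      constructor <;> simp
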